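/- Let J₀ be a two-sided p-periodic Jacobi matrix with parameters (a⁰,b⁰) and p ≥ 2, and let J = J(a,b) be a half-line Jacobi operator with bounded parameters. Then for every m ≥ 1: (Δ_{J₀}(J))_{m,m+p} = Π_{j=m}^{m+p−1} (a_j / a⁰_j), and (Δ_{J₀}(J))_{m,m+p−1} = (Π_{j=m}^{m+p−1} a⁰_j)^{−1} · (Π_{j=m}^{m+p−2} a_j) · Σ_{j=0}^{p−1} (b_{m+j} − b⁰_{m+j}). -/

import Mathlib

open scoped ComplexConjugate

noncomputable section

/-- The half-line Hilbert space `ℓ²({1,2,…})`, realized inside `ℓ²(ℕ)` with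
site `0` playing no role. -/
abbrev HN : Type := lp (fun _ : ℕ => ℂ) 2

/-- The standard basis vectors. -/
def deltaN (k : ℕ) : HN := lp.single 2 k 1

/-- Matrix entries `A_{kℓ} = ⟨δ_k, A δ_ℓ⟩`. -/
def entryN (A : HN →L[ℂ] HN) (k l : ℕ) : ℂ := inner ℂ (deltaN k) (A (deltaN l))

/-- `J` acts as the half-line Jacobi operator with parameters `(a,b)` (indexed by
`{1,2,…}`): `(Ju)_1 = b_1 u_1 + a_1 u_2`, and `(Ju)_n = a_{n−1}u_{n−1} + b_n u_n +
a_n u_{n+1}` for `n ≥ 2`; site `0` of the ambient `ℓ²(ℕ)` is annihilated. -/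
def IsHalfJacobi (a b : ℕ → ℝ) (J : HN →L[ℂ] HN) : Prop :=
  ∀ u : HN, (J u) 0 = 0 ∧
    (J u) 1 = (b 1 : ℂ) * u 1 + (a 1 : ℂ) * u 2 ∧
    ∀ n : ℕ, 2 ≤ n →
      (J u) n = (a (n - 1) : ℂ) * u (n - 1) + (b n : ℂ) * u n + (a n : ℂ) * u (n + 1)

/-- The transfer matrix `Λ_n(x) = (1/a_n)·[[x − b_n, −1], [a_n², 0]]`. -/
def lamMat (a b : ℤ → ℝ) (n : ℤ) : Matrix (Fin 2) (Fin 2) (Polynomial ℝ) :=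
  Polynomial.C (a n)⁻¹ • !![Polynomial.X - Polynomial.C (b n), -1;
    Polynomial.C ((a n) ^ 2), 0]

/-- The ordered product `Λ_n ⋯ Λ_2 Λ_1`. -/
def tMat (a b : ℤ → ℝ) : ℕ → Matrix (Fin 2) (Fin 2) (Polynomial ℝ)
  | 0 => 1
  | n + 1 => lamMat a b ((n : ℤ) + 1) * tMat a b n

/-- The discriminant `Δ_{(a,b)}(x) = Tr(Λ_p(x) ⋯ Λ_1(x))`. -/
def disc (a b : ℤ → ℝ) (p : ℕ) : Polynomial ℝ := Matrix.trace (tMat a b p)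

/-- Evaluation of a real polynomial at a bounded operator. -/
def polyOpN (q : Polynomial ℝ) (A : HN →L[ℂ] HN) : HN →L[ℂ] HN :=
  Polynomial.aeval A (q.map (algebraMap ℝ ℂ))

lemma deltaN_apply (l n : ℕ) : (deltaN l) n = if n = l then 1 else 0 := by
  rw [deltaN, lp.single_apply]
  split_ifs with h
  · subst h; simp
  · simp [Pi.single_apply, h]

lemma entryN_apply (A : HN →L[ℂ] HN) (k l : ℕ) : entryN A k l = (A (deltaN l)) k := by
  rw [entryN, deltaN, lp.inner_single_left, RCLike.inner_apply]
  simp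

lemma Jstep (a b : ℕ → ℝ) (J : HN →L[ℂ] HN) (hJ : IsHalfJacobi a b J)
    (u : HN) (hu0 : u 0 = 0) (n : ℕ) (hn : 1 ≤ n) :
    (J u) n = (a (n - 1) : ℂ) * u (n - 1) + (b n : ℂ) * u n + (a n : ℂ) * u (n + 1) := by
  rcases eq_or_lt_of_le hn with h | h
  · rw [← h]
    simp only [Nat.sub_self]
    rw [(hJ u).2.1, hu0]
    ring
  · exact (hJ u).2.2 n h

lemma powJ (a b : ℕ → ℝ) (J : HN →L[ℂ] HN) (hJ : IsHalfJacobi a b J)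
    (l : ℕ) (hl : 1 ≤ l) : ∀ k : ℕ,
    (((J ^ k) (deltaN l)) 0 = 0) ∧
    (∀ n : ℕ, n + k < l → ((J ^ k) (deltaN l)) n = 0) ∧
    (∀ n : ℕ, 1 ≤ n → n + k = l →
      ((J ^ k) (deltaN l)) n = ∏ j ∈ Finset.range k, (a (n + j) : ℂ)) ∧
    (∀ n : ℕ, 1 ≤ n → n + k = l + 1 →
      ((J ^ k) (deltaN l)) n = (∑ j ∈ Finset.range k, (b (n + j) : ℂ)) *
        ∏ j ∈ Finset.range (k - 1), (a (n + j) : ℂ)) := by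
  intro k
  induction k with
  | zero =>
    simp only [pow_zero, ContinuousLinearMap.one_apply]
    refine ⟨?_, ?_, ?_, ?_⟩
    · rw [deltaN_apply]; simp; omega
    · intro n hn; rw [deltaN_apply]; simp; omega
    · intro n hn h; rw [deltaN_apply]; simp; omega
    · intro n hn h; rw [deltaN_apply]; simp; omega
  | succ k ih =>
    obtain ⟨ih0, ih1, ih2, ih3⟩ := ih
    set u : HN := (J ^ k) (deltaN l) with hu
    have hpow : ∀ n : ℕ, ((J ^ (k+1)) (deltaN l)) n = (J u) n := by
      intro n
      rw [pow_succ', ContinuousLinearMap.mul_apply]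
    have hstep : ∀ n : ℕ, 1 ≤ n → ((J ^ (k+1)) (deltaN l)) n
        = (a (n - 1) : ℂ) * u (n - 1) + (b n : ℂ) * u n + (a n : ℂ) * u (n + 1) := by
      intro n hn
      rw [hpow]
      exact Jstep a b J hJ u ih0 n hn
    refine ⟨?_, ?_, ?_, ?_⟩
    · rw [hpow]; exact (hJ u).1
    · intro n hn
      rcases Nat.eq_zero_or_pos n with rfl | hn1
      · rw [hpow]; exact (hJ u).1
      rw [hstep n hn1]
      rw [ih1 (n-1) (by omega), ih1 n (by omega), ih1 (n+1) (by omega)]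
      ring
    · intro n hn1 hn
      rw [hstep n hn1]
      rw [ih1 (n-1) (by omega), ih1 n (by omega), ih2 (n+1) (by omega) (by omega)]
      have hre : ∀ j, n + 1 + j = n + (j + 1) := by intro j; omega
      rw [Finset.prod_congr rfl (fun j _ => by rw [hre j]),
        Finset.prod_range_succ' (fun j => (a (n + j) : ℂ)) k]
      simp only [add_zero]
      ring
    · intro n hn1 hn
      rw [hstep n hn1]
      rw [ih1 (n-1) (by omega), ih2 n hn1 (by omega), ih3 (n+1) (by omega) (by omega)]
      have hre : ∀ j, n + 1 + j = n + (j + 1) := by intro j; omega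
      rcases Nat.eq_zero_or_pos k with rfl | hk1
      · simp
      have hprod : (a n : ℂ) * ∏ j ∈ Finset.range (k - 1), (a (n + 1 + j) : ℂ)
          = ∏ j ∈ Finset.range k, (a (n + j) : ℂ) := by
        rw [Finset.prod_congr rfl (fun j _ => by rw [hre j]),
          show k = (k-1)+1 from by omega,
          Finset.prod_range_succ' (fun j => (a (n + j) : ℂ)) (k-1)]
        simp [mul_comm]
      have hsum : (b n : ℂ) + ∑ j ∈ Finset.range k, (b (n + 1 + j) : ℂ)
          = ∑ j ∈ Finset.range (k + 1), (b (n + j) : ℂ) := by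
        rw [Finset.sum_congr rfl (fun j _ => by rw [hre j]),
          Finset.sum_range_succ' (fun j => (b (n + j) : ℂ)) k]
        simp [add_comm]
      rw [show k + 1 - 1 = k from rfl, ← hsum, ← hprod]
      ring

open Polynomial Finset

lemma tMat_struct (a b : ℤ → ℝ) :
    ∀ k : ℕ, 1 ≤ k →
    ((tMat a b k 0 0).natDegree ≤ k ∧
     (tMat a b k 0 0).coeff k = ∏ n ∈ range k, (a ((n : ℤ) + 1))⁻¹ ∧
     (tMat a b k 0 0).coeff (k-1)
       = -((∑ n ∈ range k, b ((n : ℤ) + 1)) * ∏ n ∈ range k, (a ((n : ℤ) + 1))⁻¹) ∧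
     (tMat a b k 0 1).natDegree ≤ k - 1 ∧
     (tMat a b k 1 0).natDegree ≤ k - 1 ∧
     (tMat a b k 1 1).natDegree ≤ k - 1 ∧
     (tMat a b k 1 1).coeff (k-1) = 0) := by
  intro k hk
  induction k, hk using Nat.le_induction with
  | base =>
    have h1 : tMat a b 1 = lamMat a b 1 := by
      show lamMat a b (((0:ℕ) : ℤ) + 1) * tMat a b 0 = _
      norm_num [tMat]
    rw [h1]
    have e00 : lamMat a b 1 0 0 = C (a 1)⁻¹ * (X - C (b 1)) := by
      simp [lamMat]
    have e01 : lamMat a b 1 0 1 = C (a 1)⁻¹ * (-1) := by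
      simp [lamMat]
    have e10 : lamMat a b 1 1 0 = C (a 1)⁻¹ * C ((a 1)^2) := by
      simp [lamMat]
    have e11 : lamMat a b 1 1 1 = 0 := by
      simp [lamMat]
    rw [e00, e01, e10, e11]
    norm_num
    refine ⟨(natDegree_C_mul_le _ _).trans (by simp [natDegree_X_sub_C]), by ring, ?_⟩
    rw [← C_pow, ← C_mul]
    exact natDegree_C _
  | succ k hk ih =>
    obtain ⟨k', rfl⟩ : ∃ k', k = k' + 1 := ⟨k - 1, by omega⟩
    obtain ⟨d00, c00, c00', d01, d10, d11, c11⟩ := ih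
    simp only [Nat.add_sub_cancel] at c00' c11
    set α := (a ((k' : ℤ) + 1 + 1))⁻¹ with hα
    set β := b ((k' : ℤ) + 1 + 1) with hβ
    have hcast : ((k' + 1 : ℕ) : ℤ) + 1 = (k' : ℤ) + 1 + 1 := by push_cast; ring
    have hT : tMat a b (k' + 1 + 1) = lamMat a b ((k' : ℤ) + 1 + 1) * tMat a b (k' + 1) := by
      show lamMat a b (((k' + 1 : ℕ) : ℤ) + 1) * _ = _
      rw [hcast]
    have l00 : lamMat a b ((k' : ℤ) + 1 + 1) 0 0 = C α * (X - C β) := by simp [lamMat, hα, hβ]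
    have l01 : lamMat a b ((k' : ℤ) + 1 + 1) 0 1 = C α * (-1) := by simp [lamMat, hα, hβ]
    have l10 : lamMat a b ((k' : ℤ) + 1 + 1) 1 0
        = C α * C ((a ((k' : ℤ) + 1 + 1)) ^ 2) := by simp [lamMat, hα, hβ]
    have l11 : lamMat a b ((k' : ℤ) + 1 + 1) 1 1 = 0 := by simp [lamMat]
    set q00 := tMat a b (k' + 1) 0 0
    set q01 := tMat a b (k' + 1) 0 1
    set q10 := tMat a b (k' + 1) 1 0
    set q11 := tMat a b (k' + 1) 1 1
    have m00 : tMat a b (k' + 1 + 1) 0 0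
        = C α * (X * q00) - C α * (C β * q00) - C α * q10 := by
      rw [hT, Matrix.mul_apply, Fin.sum_univ_two, l00, l01]; ring
    have m01 : tMat a b (k' + 1 + 1) 0 1
        = C α * (X * q01) - C α * (C β * q01) - C α * q11 := by
      rw [hT, Matrix.mul_apply, Fin.sum_univ_two, l00, l01]; ring
    have m10 : tMat a b (k' + 1 + 1) 1 0
        = C α * (C ((a ((k' : ℤ) + 1 + 1)) ^ 2) * q00) := by
      rw [hT, Matrix.mul_apply, Fin.sum_univ_two, l10, l11]; ring
    have m11 : tMat a b (k' + 1 + 1) 1 1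
        = C α * (C ((a ((k' : ℤ) + 1 + 1)) ^ 2) * q01) := by
      rw [hT, Matrix.mul_apply, Fin.sum_univ_two, l10, l11]; ring
    have hq00top : q00.coeff (k' + 1 + 1) = 0 :=
      coeff_eq_zero_of_natDegree_lt (by omega)
    have hq10k : ∀ i, k' + 1 ≤ i → q10.coeff i = 0 := fun i hi =>
      coeff_eq_zero_of_natDegree_lt (by omega)
    have hq01k : ∀ i, k' + 1 ≤ i → q01.coeff i = 0 := fun i hi =>
      coeff_eq_zero_of_natDegree_lt (by omega)
    have hXq00 : (X * q00).natDegree ≤ 1 + q00.natDegree :=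
      natDegree_mul_le.trans (by simp [natDegree_X])
    have hXq01 : (X * q01).natDegree ≤ 1 + q01.natDegree :=
      natDegree_mul_le.trans (by simp [natDegree_X])
    refine ⟨?_, ?_, ?_, ?_, ?_, ?_, ?_⟩
    · rw [m00]
      refine (natDegree_sub_le _ _).trans (max_le ((natDegree_sub_le _ _).trans
        (max_le ?_ ?_)) ?_) <;>
        refine natDegree_mul_le.trans ?_ <;> simp only [natDegree_C, zero_add]
      · omega
      · refine natDegree_mul_le.trans ?_
        simp only [natDegree_C, zero_add]
        omega
      · omega
    · rw [m00]
      simp only [coeff_sub, coeff_C_mul]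
      rw [coeff_X_mul, c00, hq00top, hq10k _ (by omega)]
      conv_rhs => rw [prod_range_succ, hcast]
      ring
    · rw [m00]
      rw [Nat.add_sub_cancel]
      simp only [coeff_sub, coeff_C_mul]
      rw [coeff_X_mul, c00', c00, hq10k _ (by omega)]
      conv_rhs => rw [prod_range_succ, sum_range_succ, hcast]
      ring
    · rw [m01, Nat.add_sub_cancel]
      refine (natDegree_sub_le _ _).trans (max_le ((natDegree_sub_le _ _).trans
        (max_le ?_ ?_)) ?_) <;>
        refine natDegree_mul_le.trans ?_ <;> simp only [natDegree_C, zero_add]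
      · omega
      · refine natDegree_mul_le.trans ?_
        simp only [natDegree_C, zero_add]
        omega
      · omega
    · rw [m10, Nat.add_sub_cancel]
      refine natDegree_mul_le.trans ?_
      simp only [natDegree_C, zero_add]
      refine natDegree_mul_le.trans ?_
      simp only [natDegree_C, zero_add]
      omega
    · rw [m11, Nat.add_sub_cancel]
      refine natDegree_mul_le.trans ?_
      simp only [natDegree_C, zero_add]
      refine natDegree_mul_le.trans ?_
      simp only [natDegree_C, zero_add]
      omega
    · rw [m11, Nat.add_sub_cancel, coeff_C_mul, coeff_C_mul, hq01k _ (by omega)]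
      ring

lemma disc_coeffs (a b : ℤ → ℝ) (p : ℕ) (hp : 2 ≤ p) :
    (disc a b p).natDegree ≤ p ∧
    (disc a b p).coeff p = ∏ n ∈ range p, (a ((n : ℤ) + 1))⁻¹ ∧
    (disc a b p).coeff (p - 1)
      = -((∑ n ∈ range p, b ((n : ℤ) + 1)) * ∏ n ∈ range p, (a ((n : ℤ) + 1))⁻¹) := by
  obtain ⟨d00, c00, c00', d01, d10, d11, c11⟩ := tMat_struct a b p (by omega)
  have htr : disc a b p = tMat a b p 0 0 + tMat a b p 1 1 := by
    rw [disc, Matrix.trace_fin_two]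
  refine ⟨?_, ?_, ?_⟩
  · rw [htr]
    exact (natDegree_add_le _ _).trans (max_le d00 (d11.trans (by omega)))
  · rw [htr, coeff_add, c00, coeff_eq_zero_of_natDegree_lt (by omega), add_zero]
  · rw [htr, coeff_add, c00', c11, add_zero]

lemma sum_shift (f : ℤ → ℝ) (p : ℕ) (hper : Function.Periodic f (p : ℤ)) (x : ℤ) :
    ∑ j ∈ range p, f (x + 1 + (j : ℤ)) = ∑ j ∈ range p, f (x + (j : ℤ)) := by
  have h1 := Finset.sum_range_succ' (fun j : ℕ => f (x + j)) p
  have h2 := Finset.sum_range_succ (fun j : ℕ => f (x + j)) p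
  have key := h1.symm.trans h2
  rw [show ((0 : ℕ) : ℤ) = 0 from rfl, add_zero, hper x] at key
  have e1 : ∑ j ∈ range p, f (x + ((j : ℕ) + 1 : ℕ)) = ∑ j ∈ range p, f (x + 1 + (j : ℤ)) :=
    Finset.sum_congr rfl fun j _ => by congr 1; push_cast; ring
  rw [e1] at key
  exact add_right_cancel key

lemma sum_window (f : ℤ → ℝ) (p : ℕ) (hper : Function.Periodic f (p : ℤ)) :
    ∀ m : ℕ, 1 ≤ m →
    ∑ j ∈ range p, f ((m : ℤ) + j) = ∑ n ∈ range p, f ((n : ℤ) + 1) := by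
  intro m hm
  induction m, hm using Nat.le_induction with
  | base =>
    refine Finset.sum_congr rfl fun j _ => ?_
    norm_num [add_comm]
  | succ m hm ih =>
    rw [← ih, ← sum_shift f p hper (m : ℤ)]
    refine Finset.sum_congr rfl fun j _ => ?_
    congr 1
    all_goals (push_cast; ring)

lemma prod_shift (f : ℤ → ℝ) (p : ℕ) (hper : Function.Periodic f (p : ℤ))
    (hne : ∀ n, f n ≠ 0) (x : ℤ) :
    ∏ j ∈ range p, f (x + 1 + (j : ℤ)) = ∏ j ∈ range p, f (x + (j : ℤ)) := by
  have h1 := Finset.prod_range_succ' (fun j : ℕ => f (x + j)) p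
  have h2 := Finset.prod_range_succ (fun j : ℕ => f (x + j)) p
  have key := h1.symm.trans h2
  rw [show ((0 : ℕ) : ℤ) = 0 from rfl, add_zero, hper x] at key
  have e1 : ∏ j ∈ range p, f (x + ((j : ℕ) + 1 : ℕ)) = ∏ j ∈ range p, f (x + 1 + (j : ℤ)) :=
    Finset.prod_congr rfl fun j _ => by congr 1; push_cast; ring
  rw [e1] at key
  exact mul_right_cancel₀ (hne _) key

lemma prod_window (f : ℤ → ℝ) (p : ℕ) (hper : Function.Periodic f (p : ℤ))
    (hne : ∀ n, f n ≠ 0) : ∀ m : ℕ, 1 ≤ m →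
    ∏ j ∈ range p, f ((m : ℤ) + j) = ∏ n ∈ range p, f ((n : ℤ) + 1) := by
  intro m hm
  induction m, hm using Nat.le_induction with
  | base =>
    refine Finset.prod_congr rfl fun j _ => ?_
    norm_num [add_comm]
  | succ m hm ih =>
    rw [← ih, ← prod_shift f p hper hne (m : ℤ)]
    refine Finset.prod_congr rfl fun j _ => ?_
    congr 1
    all_goals (push_cast; ring)

/-- the extreme off-diagonal entries of `Δ_{J₀}(J)` for a half-line
Jacobi operator `J`. -/
theorem statement16 (p : ℕ) (hp : 2 ≤ p)
    (a0 b0 : ℤ → ℝ) (ha0pos : ∀ n, 0 < a0 n)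
    (hpera : Function.Periodic a0 (p : ℤ)) (hperb : Function.Periodic b0 (p : ℤ))
    (a b : ℕ → ℝ) (hbdd : ∃ C : ℝ, ∀ n : ℕ, |a n| ≤ C ∧ |b n| ≤ C)
    (hpos : ∀ n : ℕ, 1 ≤ n → 0 < a n)
    (J : HN →L[ℂ] HN) (hJ : IsHalfJacobi a b J)
    (m : ℕ) (hm : 1 ≤ m) :
    entryN (polyOpN (disc a0 b0 p) J) m (m + p)
      = ∏ j ∈ Finset.range p, ((a (m + j) : ℂ) / (a0 ((m : ℤ) + j) : ℂ)) ∧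
    entryN (polyOpN (disc a0 b0 p) J) m (m + p - 1)
      = (∏ j ∈ Finset.range p, (a0 ((m : ℤ) + j) : ℂ))⁻¹ *
          (∏ j ∈ Finset.range (p - 1), (a (m + j) : ℂ)) *
          ∑ j ∈ Finset.range p, ((b (m + j) : ℂ) - (b0 ((m : ℤ) + j) : ℂ)) := by
  obtain ⟨hdeg, hc1, hc2⟩ := disc_coeffs a0 b0 p hp
  set q := disc a0 b0 p with hq
  have ha0ne : ∀ n, a0 n ≠ 0 := fun n => (ha0pos n).ne'
  have hexp : ∀ l : ℕ, entryN (polyOpN q J) m l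
      = ∑ i ∈ Finset.range (p + 1), (q.coeff i : ℂ) * (((J ^ i) (deltaN l)) m) := by
    intro l
    rw [entryN_apply]
    have hdeg' : (q.map (algebraMap ℝ ℂ)).natDegree < p + 1 :=
      lt_of_le_of_lt (Polynomial.natDegree_map_le.trans hdeg) (lt_add_one p)
    rw [polyOpN, Polynomial.aeval_eq_sum_range' hdeg']
    rw [ContinuousLinearMap.sum_apply]
    rw [lp.coeFn_sum, Finset.sum_apply]
    refine Finset.sum_congr rfl fun i _ => ?_
    rw [ContinuousLinearMap.smul_apply, lp.coeFn_smul, Pi.smul_apply,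
      Polynomial.coeff_map, smul_eq_mul]
    norm_num
  have hawin : (∏ n ∈ Finset.range p, (a0 ((n : ℤ) + 1))⁻¹ : ℝ)
      = (∏ j ∈ Finset.range p, a0 ((m : ℤ) + j))⁻¹ := by
    rw [prod_window a0 p hpera ha0ne m hm, Finset.prod_inv_distrib]
  have hbwin : (∑ n ∈ Finset.range p, b0 ((n : ℤ) + 1) : ℝ)
      = ∑ j ∈ Finset.range p, b0 ((m : ℤ) + j) := by
    rw [sum_window b0 p hperb m hm]
  constructor
  · -- entry at (m, m+p)
    have PW := powJ a b J hJ (m + p) (by omega)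
    rw [hexp (m + p), Finset.sum_range_succ]
    rw [Finset.sum_eq_zero (fun i hi => by
      rw [(PW i).2.1 m (by simp at hi; omega), mul_zero])]
    rw [zero_add, (PW p).2.2.1 m hm (by omega)]
    rw [hc1, hawin]
    push_cast
    rw [Finset.prod_div_distrib]
    ring
  · -- entry at (m, m+p-1)
    have PW := powJ a b J hJ (m + p - 1) (by omega)
    rw [hexp (m + p - 1)]
    rw [show p + 1 = (p - 1) + 1 + 1 from by omega, Finset.sum_range_succ,
      Finset.sum_range_succ]
    rw [Finset.sum_eq_zero (fun i hi => by
      rw [(PW i).2.1 m (by simp at hi; omega), mul_zero])]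
    rw [zero_add]
    rw [show p - 1 + 1 = p from by omega]
    rw [(PW (p - 1)).2.2.1 m hm (by omega), (PW p).2.2.2 m hm (by omega)]
    rw [hc2, hc1, hawin, hbwin]
    rw [Finset.sum_sub_distrib]
    push_cast
    ring
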